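/- arXiv:2002.12027 — 2 statements merged into one kernel-verified Lean document; each statement's English description precedes it below -/
import Mathlib

section
/- Let T be a finite plane tree with n vertices, let v₀, v₁, …, v_{n−1} be its vertices listed in lexicographical (depth-first) order, and define the Lukasiewicz path by W₀ = 0 and W_{i+1} = W_i + k_{v_i} − 1 for 0 ≤ i ≤ n−1, where k_v is the number of children of v. Then W_n = −1 and W_i ≥ 0 for all 0 ≤ i ≤ n−1. -/
/-- A plane tree: a root together with an ordered (finite) list of subtrees. -/
inductive PlaneTree : Type
  | node : List PlaneTree → PlaneTree

namespace PlaneTree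

/-- The list of outdegrees (numbers of children) of the vertices of a plane tree,
in lexicographical (depth-first, left-to-right) order. -/
def degList : PlaneTree → List ℕ
  | node ts => ts.length :: (ts.attach.map (fun ⟨t, _⟩ => degList t)).flatten

end PlaneTree

lemma degList_node (ts : List PlaneTree) :
    PlaneTree.degList (.node ts) = ts.length :: (ts.map PlaneTree.degList).flatten := by
  simp [PlaneTree.degList]

theorem sumLen : ∀ t : PlaneTree, (PlaneTree.degList t).sum + 1 = (PlaneTree.degList t).length
  | .node ts => by
    have h : ∀ t ∈ ts, (PlaneTree.degList t).sum + 1 = (PlaneTree.degList t).length :=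
      fun t _ => sumLen t
    rw [degList_node]
    simp only [List.sum_cons, List.length_cons]
    induction ts with
    | nil => simp
    | cons a l ih =>
      simp only [List.map_cons, List.flatten_cons, List.sum_append, List.length_append,
        List.length_cons]
      have ha := h a (by simp)
      have := ih (fun t ht => h t (by simp [ht]))
      omega

/-- prefix sums of a flatten of "good" blocks -/
lemma flat_prefix (Ls : List (List ℕ))
    (h1 : ∀ L ∈ Ls, ∀ j < L.length, j ≤ (L.take j).sum)
    (h2 : ∀ L ∈ Ls, L.sum + 1 = L.length) :
    ∀ j < Ls.flatten.length, j + 1 ≤ (Ls.flatten.take j).sum + Ls.length := by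
  induction Ls with
  | nil => simp
  | cons L rest ih =>
    intro j hj
    simp only [List.flatten_cons, List.length_append] at hj
    by_cases hcase : j < L.length
    · rw [List.flatten_cons, List.take_append_of_le_length (le_of_lt hcase)]
      have := h1 L (by simp) j hcase
      simp only [List.length_cons]
      omega
    · push_neg at hcase
      obtain ⟨j', rfl⟩ : ∃ j', j = L.length + j' := ⟨j - L.length, by omega⟩
      rw [List.flatten_cons, List.take_append]
      have hj' : j' < rest.flatten.length := by omega
      have := ih (fun M hM => h1 M (by simp [hM])) (fun M hM => h2 M (by simp [hM])) j' hj'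
      have hL := h2 L (by simp)
      simp only [List.sum_append, List.length_cons, List.take_of_length_le (Nat.le_add_right L.length j'), Nat.add_sub_cancel_left]
      omega

theorem prefix_ge : ∀ t : PlaneTree, ∀ j < (PlaneTree.degList t).length,
    j ≤ ((PlaneTree.degList t).take j).sum
  | .node ts => by
    intro j hj
    have hrec : ∀ t ∈ ts, ∀ j < (PlaneTree.degList t).length,
        j ≤ ((PlaneTree.degList t).take j).sum := fun t _ => prefix_ge t
    rw [degList_node] at hj ⊢
    match j with
    | 0 => simp
    | k + 1 =>
      simp only [List.length_cons, Nat.add_lt_add_iff_right] at hj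
      rw [List.take_cons (by omega), List.sum_cons]
      simp only [Nat.add_sub_cancel]
      have h1 : ∀ L ∈ ts.map PlaneTree.degList, ∀ j < L.length, j ≤ (L.take j).sum := by
        intro L hL
        obtain ⟨t, ht, rfl⟩ := List.mem_map.mp hL
        exact hrec t ht
      have h2 : ∀ L ∈ ts.map PlaneTree.degList, L.sum + 1 = L.length := by
        intro L hL
        obtain ⟨t, _, rfl⟩ := List.mem_map.mp hL
        exact sumLen t
      have := flat_prefix _ h1 h2 k hj
      rw [List.length_map] at this
      omega

/-- The Lukasiewicz path of a plane tree: if `v₀, …, v_{n-1}` are the vertices in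
lexicographical order, `W₀ = 0` and `W_{i+1} = W_i + k_{v_i} - 1`, then
`W_n = -1` and `W_i ≥ 0` for all `0 ≤ i ≤ n - 1`. -/
theorem stmt_5 (T : PlaneTree) (W : ℕ → ℤ) (hW0 : W 0 = 0)
    (hWrec : ∀ i (h : i < (PlaneTree.degList T).length),
      W (i + 1) = W i + (((PlaneTree.degList T).get ⟨i, h⟩ : ℕ) : ℤ) - 1) :
    W (PlaneTree.degList T).length = -1 ∧
    ∀ i < (PlaneTree.degList T).length, 0 ≤ W i := by
  have key : ∀ i ≤ (PlaneTree.degList T).length, W i = (((PlaneTree.degList T).take i).sum : ℤ) - i := by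
    intro i hi
    induction i with
    | zero => simpa using hW0
    | succ k ih =>
      have hk : k < (PlaneTree.degList T).length := hi
      have hsum : ((PlaneTree.degList T).take (k + 1)).sum = ((PlaneTree.degList T).take k).sum + (PlaneTree.degList T).get ⟨k, hk⟩ := by
        rw [List.sum_take_succ _ _ hk]; simp [List.get_eq_getElem]
      rw [hWrec k hk, ih (le_of_lt hk), hsum]
      push_cast
      ring
  constructor
  · rw [key (PlaneTree.degList T).length le_rfl, List.take_of_length_le le_rfl]
    have := sumLen T
    omega
  · intro i hi
    rw [key i (le_of_lt hi)]
    have := prefix_ge T i hi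
    omega
end

section
/- Let w be a weight sequence with w_0 > 0, let s > 0 with F_w(s) < ∞ and s F_w'(s) = 1, and suppose μ is the critical probability distribution with generating function F_μ(x) = e^{F_w(sx) − F_w(s)}. If μ has finite variance σ_μ², then σ_μ² = s² F_w''(s) + 1; in particular σ_μ² ≥ 1. -/
open Set Filter Topology Finset

private lemma aux_summable_pow {c : ℕ → ℝ} (hc : ∀ i, 0 ≤ c i) (hsc : Summable c)
    {x : ℝ} (hx : |x| ≤ 1) (e : ℕ → ℕ) : Summable fun i => c i * x ^ e i := by
  refine Summable.of_norm_bounded hsc fun i => ?_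
  rw [Real.norm_eq_abs, abs_mul, abs_pow, abs_of_nonneg (hc i)]
  calc c i * |x| ^ e i ≤ c i * 1 := by
        gcongr
        · exact hc i
        · exact pow_le_one₀ (abs_nonneg x) hx
    _ = c i := mul_one _

private lemma aux_tendsto_tsum_pow {c : ℕ → ℝ} (hc : ∀ i, 0 ≤ c i) (hsc : Summable c)
    (e : ℕ → ℕ) :
    Tendsto (fun x : ℝ => ∑' i, c i * x ^ e i) (𝓝[Set.Ioo (0:ℝ) 1] 1) (𝓝 (∑' i, c i)) := by
  have hcont : ContinuousOn (fun x : ℝ => ∑' i, c i * x ^ e i) (Set.Icc (-1) 1) := by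
    refine (tendstoUniformlyOn_tsum hsc fun i x hx => ?_).continuousOn
      (Filter.Frequently.of_forall fun t => ?_)
    · rw [Real.norm_eq_abs, abs_mul, abs_pow, abs_of_nonneg (hc i)]
      calc c i * |x| ^ e i ≤ c i * 1 := by
            gcongr
            · exact hc i
            · exact pow_le_one₀ (abs_nonneg x) (abs_le.2 ⟨hx.1, hx.2⟩)
        _ = c i := mul_one _
    · exact continuousOn_finset_sum _ fun i _ =>
        (continuous_const.mul (continuous_pow (e i))).continuousOn
  have h := hcont.continuousWithinAt (x := 1) (by constructor <;> norm_num)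
  unfold ContinuousWithinAt at h
  simp only [one_pow, mul_one] at h
  exact h.mono_left (nhdsWithin_mono _ (fun y hy => ⟨by linarith [hy.1], hy.2.le⟩))

private lemma aux_hasDerivAt_tsum_pow {c : ℕ → ℝ} (hc : ∀ i, 0 ≤ c i)
    (hs1 : Summable fun i : ℕ => (i : ℝ) * c i) {x : ℝ} (hx : x ∈ Set.Ioo (-1:ℝ) 1) :
    HasDerivAt (fun y : ℝ => ∑' i, c i * y ^ i) (∑' i : ℕ, (i : ℝ) * c i * x ^ (i - 1)) x := by
  have hg : ∀ (i : ℕ) (z : ℝ), z ∈ Set.Ioo (-1:ℝ) 1 →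
      HasDerivAt (fun z : ℝ => c i * z ^ i) (c i * ((i:ℝ) * z ^ (i-1))) z :=
    fun i z _ => (hasDerivAt_pow i z).const_mul (c i)
  have hbound : ∀ (i : ℕ) (z : ℝ), z ∈ Set.Ioo (-1:ℝ) 1 →
      ‖c i * ((i:ℝ) * z ^ (i-1))‖ ≤ (i:ℝ) * c i := by
    intro i z hz
    have hz1 : |z| ≤ 1 := le_of_lt (abs_lt.2 ⟨hz.1, hz.2⟩)
    rw [Real.norm_eq_abs, abs_mul, abs_mul, abs_pow, Nat.abs_cast, abs_of_nonneg (hc i)]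
    calc c i * ((i:ℝ) * |z| ^ (i-1)) ≤ c i * ((i:ℝ) * 1) := by
          gcongr
          · exact hc i
          · exact pow_le_one₀ (abs_nonneg z) hz1
      _ = (i:ℝ) * c i := by ring
  have h0 : Summable fun i : ℕ => c i * (0:ℝ) ^ i := by
    apply summable_of_ne_finset_zero (s := ({0} : Finset ℕ))
    intro i hi
    simp only [Finset.mem_singleton] at hi
    simp [zero_pow hi]
  have key := hasDerivAt_tsum_of_isPreconnected hs1 isOpen_Ioo
    (convex_Ioo (-1:ℝ) 1).isPreconnected hg hbound
    (y₀ := 0) (by constructor <;> norm_num) h0 hx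
  rw [show (∑' i : ℕ, (i : ℝ) * c i * x ^ (i - 1)) = ∑' n : ℕ, c n * ((n : ℝ) * x ^ (n - 1)) from
    tsum_congr fun i => by ring]
  exact key

private lemma aux_hasDerivAt_tsum_pow' {c : ℕ → ℝ} (hc : ∀ i, 0 ≤ c i)
    (hs2 : Summable fun i : ℕ => (i : ℝ)^2 * c i) {x : ℝ} (hx : x ∈ Set.Ioo (-1:ℝ) 1) :
    HasDerivAt (fun y : ℝ => ∑' i : ℕ, (i:ℝ) * c i * y ^ (i-1))
      (∑' i : ℕ, (i:ℝ) * ((i-1 : ℕ):ℝ) * c i * x ^ (i - 2)) x := by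
  have hg : ∀ (i : ℕ) (z : ℝ), z ∈ Set.Ioo (-1:ℝ) 1 →
      HasDerivAt (fun z : ℝ => (i:ℝ) * c i * z ^ (i-1))
        ((i:ℝ) * c i * (((i-1:ℕ):ℝ) * z ^ (i-2))) z := by
    intro i z _
    have h := (hasDerivAt_pow (i-1) z).const_mul ((i:ℝ) * c i)
    have h2 : i - 1 - 1 = i - 2 := by omega
    rwa [h2] at h
  have hbound : ∀ (i : ℕ) (z : ℝ), z ∈ Set.Ioo (-1:ℝ) 1 →
      ‖(i:ℝ) * c i * (((i-1:ℕ):ℝ) * z ^ (i-2))‖ ≤ (i:ℝ)^2 * c i := by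
    intro i z hz
    have hz1 : |z| ≤ 1 := le_of_lt (abs_lt.2 ⟨hz.1, hz.2⟩)
    have hi1 : ((i-1:ℕ):ℝ) ≤ (i:ℝ) := Nat.cast_le.2 (Nat.sub_le i 1)
    rw [Real.norm_eq_abs, abs_mul, abs_mul, abs_mul, abs_pow, Nat.abs_cast, Nat.abs_cast,
      abs_of_nonneg (hc i)]
    calc (i:ℝ) * c i * (((i-1:ℕ):ℝ) * |z| ^ (i-2))
        ≤ (i:ℝ) * c i * ((i:ℝ) * 1) := by
          gcongr
          · exact mul_nonneg (Nat.cast_nonneg i) (hc i)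
          · exact pow_le_one₀ (abs_nonneg z) hz1
      _ = (i:ℝ)^2 * c i := by ring
  have h0 : Summable fun i : ℕ => (i:ℝ) * c i * (0:ℝ) ^ (i-1) := by
    apply summable_of_ne_finset_zero (s := ({0, 1} : Finset ℕ))
    intro i hi
    simp only [Finset.mem_insert, Finset.mem_singleton] at hi
    push_neg at hi
    have h1 : i - 1 ≠ 0 := by omega
    simp [zero_pow h1]
  have key := hasDerivAt_tsum_of_isPreconnected hs2 isOpen_Ioo
    (convex_Ioo (-1:ℝ) 1).isPreconnected hg hbound
    (y₀ := 0) (by constructor <;> norm_num) h0 hx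
  rw [show (∑' i : ℕ, (i:ℝ) * ((i-1 : ℕ):ℝ) * c i * x ^ (i - 2))
      = ∑' n : ℕ, (n:ℝ) * c n * (((n-1:ℕ):ℝ) * x ^ (n-2)) from tsum_congr fun i => by ring]
  exact key
/-- If `w` is a weight sequence with `w₀ > 0`, `s > 0` with `F_w(s) < ∞` and
`s F_w'(s) = 1`, and `μ` is the critical probability distribution with generating
function `F_μ(x) = exp (F_w(sx) - F_w(s))`, then, if `μ` has finite variance `σ_μ²`,
`σ_μ² = s² F_w''(s) + 1`; in particular `σ_μ² ≥ 1`. -/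
theorem stmt_13 (w : ℕ → ℝ) (hwnn : ∀ i, 0 ≤ w i) (hw0 : 0 < w 0)
    (s : ℝ) (hs : 0 < s)
    (hsum : Summable fun i : ℕ => w i * s ^ i)
    (hmean : Summable fun i : ℕ => (i : ℝ) * w i * s ^ i)
    (hcrit : ∑' i : ℕ, (i : ℝ) * w i * s ^ i = 1)
    (μ : ℕ → ℝ) (hμnn : ∀ i, 0 ≤ μ i) (hμs : Summable μ) (hμ1 : ∑' i, μ i = 1)
    (hμm : Summable fun i : ℕ => (i : ℝ) * μ i) (hμcrit : ∑' i : ℕ, (i : ℝ) * μ i = 1)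
    (hgen : ∀ x ∈ Set.Icc (0 : ℝ) 1,
      ∑' i : ℕ, μ i * x ^ i = Real.exp ((∑' i : ℕ, w i * (s * x) ^ i) - ∑' i : ℕ, w i * s ^ i))
    (hvar : Summable fun i : ℕ => (i : ℝ) ^ 2 * μ i) :
    Summable (fun i : ℕ => (i : ℝ) * ((i : ℝ) - 1) * w i * s ^ i) ∧
    (∑' i : ℕ, (i : ℝ) ^ 2 * μ i) - 1
      = (∑' i : ℕ, (i : ℝ) * ((i : ℝ) - 1) * w i * s ^ i) + 1 ∧
    1 ≤ (∑' i : ℕ, (i : ℝ) ^ 2 * μ i) - 1 := by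
  classical
  -- the weight coefficients
  set a : ℕ → ℝ := fun i => w i * s ^ i with ha_def
  have ha : ∀ i, 0 ≤ a i := fun i => mul_nonneg (hwnn i) (pow_nonneg hs.le i)
  have haS : Summable a := hsum
  have haS1 : Summable (fun i : ℕ => (i : ℝ) * a i) :=
    hmean.congr fun i => mul_assoc _ _ _
  have haC : ∑' i : ℕ, (i : ℝ) * a i = 1 := by
    rw [← hcrit]; exact tsum_congr fun i => (mul_assoc _ _ _).symm
  -- cast lemma
  have hcast : ∀ (c : ℕ → ℝ) (i : ℕ),
      (i : ℝ) * ((i - 1 : ℕ) : ℝ) * c i = (i : ℝ) * ((i : ℝ) - 1) * c i := by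
    intro c i
    cases i with
    | zero => simp
    | succ n => push_cast [Nat.succ_sub_one]; ring
  -- second factorial moment coefficients for μ
  have hμ2nn : ∀ i : ℕ, 0 ≤ (i : ℝ) * ((i - 1 : ℕ) : ℝ) * μ i := fun i =>
    mul_nonneg (mul_nonneg (Nat.cast_nonneg i) (Nat.cast_nonneg _)) (hμnn i)
  have hμ2S : Summable (fun i : ℕ => (i : ℝ) * ((i - 1 : ℕ) : ℝ) * μ i) := by
    refine Summable.of_norm_bounded hvar fun i => ?_
    rw [Real.norm_eq_abs, abs_of_nonneg (hμ2nn i)]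
    have h1 : ((i - 1 : ℕ) : ℝ) ≤ (i : ℝ) := Nat.cast_le.2 (Nat.sub_le i 1)
    calc (i : ℝ) * ((i - 1 : ℕ) : ℝ) * μ i ≤ (i : ℝ) * (i : ℝ) * μ i :=
          mul_le_mul_of_nonneg_right
            (mul_le_mul_of_nonneg_left h1 (Nat.cast_nonneg i)) (hμnn i)
      _ = (i : ℝ) ^ 2 * μ i := by ring
  set V : ℝ := ∑' i : ℕ, (i : ℝ) * ((i - 1 : ℕ) : ℝ) * μ i with hV_def
  -- the functions
  set M : ℝ → ℝ := fun x => ∑' i : ℕ, μ i * x ^ i with hM_def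
  set M₁ : ℝ → ℝ := fun x => ∑' i : ℕ, (i : ℝ) * μ i * x ^ (i - 1) with hM1_def
  set M₂ : ℝ → ℝ := fun x => ∑' i : ℕ, (i : ℝ) * ((i - 1 : ℕ) : ℝ) * μ i * x ^ (i - 2)
    with hM2_def
  set G : ℝ → ℝ := fun x => ∑' i : ℕ, a i * x ^ i with hG_def
  set G₁ : ℝ → ℝ := fun x => ∑' i : ℕ, (i : ℝ) * a i * x ^ (i - 1) with hG1_def
  have hIoo : Set.Ioo (0:ℝ) 1 ⊆ Set.Ioo (-1:ℝ) 1 := fun y hy => ⟨by linarith [hy.1], hy.2⟩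
  -- generating function identity
  have hgen' : ∀ x ∈ Set.Icc (0:ℝ) 1, M x = Real.exp (G x - G 1) := by
    intro x hx
    have h1 : (∑' i : ℕ, w i * (s * x) ^ i) = G x := by
      rw [hG_def]
      exact tsum_congr fun i => by rw [mul_pow]; ring
    have h2 : G 1 = tsum a := by
      simp only [hG_def]
      simp
    simp only [hM_def]
    rw [hgen x hx, h1, h2]
  have hMpos : ∀ x ∈ Set.Icc (0:ℝ) 1, 0 < M x := fun x hx =>
    (hgen' x hx).symm ▸ Real.exp_pos _
  -- derivatives
  have hDM : ∀ x ∈ Set.Ioo (-1:ℝ) 1, HasDerivAt M (M₁ x) x := fun x hx =>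
    aux_hasDerivAt_tsum_pow hμnn hμm hx
  have hDM1 : ∀ x ∈ Set.Ioo (-1:ℝ) 1, HasDerivAt M₁ (M₂ x) x := fun x hx =>
    aux_hasDerivAt_tsum_pow' hμnn hvar hx
  have hDG : ∀ x ∈ Set.Ioo (-1:ℝ) 1, HasDerivAt G (G₁ x) x := fun x hx =>
    aux_hasDerivAt_tsum_pow ha haS1 hx
  -- first order identity M₁ = G₁ * M on (0,1)
  have hK : ∀ x ∈ Set.Ioo (0:ℝ) 1, M₁ x = G₁ x * M x := by
    intro x hx
    have hE : HasDerivAt (fun y => Real.exp (G y - G 1)) (G₁ x * Real.exp (G x - G 1)) x := by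
      have h := ((hDG x (hIoo hx)).sub_const (G 1)).exp
      convert h using 1
      ring
    have hMeq : M =ᶠ[nhds x] fun y => Real.exp (G y - G 1) := by
      filter_upwards [Ioo_mem_nhds hx.1 hx.2] with y hy
      exact hgen' y ⟨hy.1.le, hy.2.le⟩
    have h2 : HasDerivAt M (G₁ x * Real.exp (G x - G 1)) x := hE.congr_of_eventuallyEq hMeq
    rw [(hDM x (hIoo hx)).unique h2, hgen' x ⟨hx.1.le, hx.2.le⟩]
  -- pointwise summability
  have habsle : ∀ {x : ℝ}, x ∈ Set.Ioo (0:ℝ) 1 → |x| ≤ 1 := fun {x} hx =>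
    abs_le.2 ⟨by linarith [hx.1], hx.2.le⟩
  have hμ1nn : ∀ i : ℕ, 0 ≤ (i : ℝ) * μ i := fun i =>
    mul_nonneg (Nat.cast_nonneg i) (hμnn i)
  have ha1nn : ∀ i : ℕ, 0 ≤ (i : ℝ) * a i := fun i =>
    mul_nonneg (Nat.cast_nonneg i) (ha i)
  have SG₁ : ∀ {x : ℝ}, x ∈ Set.Ioo (0:ℝ) 1 →
      Summable (fun i : ℕ => (i : ℝ) * a i * x ^ (i - 1)) := fun {x} hx =>
    aux_summable_pow ha1nn haS1 (habsle hx) _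
  have SM : ∀ {x : ℝ}, x ∈ Set.Ioo (0:ℝ) 1 →
      Summable (fun i : ℕ => μ i * x ^ i) := fun {x} hx =>
    aux_summable_pow hμnn hμs (habsle hx) _
  -- M₂ is nonnegative and bounded by V on (0,1)
  have hM2nn : ∀ x ∈ Set.Ioo (0:ℝ) 1, 0 ≤ M₂ x := by
    intro x hx
    rw [hM2_def]
    exact tsum_nonneg fun i => mul_nonneg (hμ2nn i) (pow_nonneg hx.1.le _)
  have hM2le : ∀ x ∈ Set.Ioo (0:ℝ) 1, M₂ x ≤ V := by
    intro x hx
    rw [hM2_def, hV_def]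
    refine Summable.tsum_le_tsum (fun i => ?_) (aux_summable_pow hμ2nn hμ2S (habsle hx) _) hμ2S
    calc (i : ℝ) * ((i - 1 : ℕ) : ℝ) * μ i * x ^ (i - 2)
        ≤ (i : ℝ) * ((i - 1 : ℕ) : ℝ) * μ i * 1 := by
          gcongr
          · exact hμ2nn i
          · exact pow_le_one₀ hx.1.le hx.2.le
      _ = (i : ℝ) * ((i - 1 : ℕ) : ℝ) * μ i := mul_one _
  have hVnn : 0 ≤ V := by
    rw [hV_def]; exact tsum_nonneg hμ2nn
  -- Lipschitz bound for M₁
  have hLip : ∀ x ∈ Set.Ioo (0:ℝ) 1, ∀ y ∈ Set.Ioo (0:ℝ) 1, ‖M₁ y - M₁ x‖ ≤ V * ‖y - x‖ := by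
    intro x hx y hy
    refine Convex.norm_image_sub_le_of_norm_hasDerivWithin_le
      (f' := M₂) (fun t ht => (hDM1 t (hIoo ht)).hasDerivWithinAt) (fun t ht => ?_)
      (convex_Ioo 0 1) hx hy
    rw [Real.norm_eq_abs, abs_of_nonneg (hM2nn t ht)]
    exact hM2le t ht
  -- monotonicity of M
  have hMmono : ∀ x ∈ Set.Ioo (0:ℝ) 1, ∀ y ∈ Set.Ioo (0:ℝ) 1, x ≤ y → M x ≤ M y := by
    intro x hx y hy hxy
    rw [hM_def]
    refine Summable.tsum_le_tsum (fun i => ?_) (SM hx) (SM hy)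
    gcongr
    · exact hμnn i
    · exact hx.1.le
  -- key partial-sum bound
  have hstep : ∀ (N : ℕ), ∀ x ∈ Set.Ioo (0:ℝ) 1,
      (∑ i ∈ Finset.range N, (i : ℝ) * ((i - 1 : ℕ) : ℝ) * a i * x ^ (i - 2)) ≤ V / M x := by
    intro N x hx
    have hMx : 0 < M x := hMpos x ⟨hx.1.le, hx.2.le⟩
    set p : ℝ → ℝ := fun t => ∑ i ∈ Finset.range N, (i : ℝ) * a i * t ^ (i - 1) with hp_def
    have hder : HasDerivAt p
        (∑ i ∈ Finset.range N, (i : ℝ) * ((i - 1 : ℕ) : ℝ) * a i * x ^ (i - 2)) x := by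
      rw [hp_def]
      refine HasDerivAt.fun_sum fun i _ => ?_
      have h := (hasDerivAt_pow (i - 1) x).const_mul ((i : ℝ) * a i)
      have h2 : i - 1 - 1 = i - 2 := by omega
      rw [h2] at h
      exact h.congr_deriv (by ring)
    have hslope := hasDerivAt_iff_tendsto_slope.mp hder
    have hslope' : Filter.Tendsto (slope p x) (nhdsWithin x (Set.Ioi x))
        (nhds (∑ i ∈ Finset.range N, (i : ℝ) * ((i - 1 : ℕ) : ℝ) * a i * x ^ (i - 2))) :=
      hslope.mono_left (nhdsWithin_mono _ fun y hy => ne_of_gt hy)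
    refine le_of_tendsto hslope' ?_
    filter_upwards [Ioo_mem_nhdsGT_of_mem ⟨le_refl x, hx.2⟩] with y hy
    have hy' : y ∈ Set.Ioo (0:ℝ) 1 := ⟨hx.1.trans hy.1, hy.2⟩
    have hxy : x < y := hy.1
    rw [slope_def_field]
    have h1 : p y - p x ≤ G₁ y - G₁ x := by
      have e1 : G₁ y - G₁ x
          = ∑' i : ℕ, ((i : ℝ) * a i * y ^ (i - 1) - (i : ℝ) * a i * x ^ (i - 1)) := by
        simp only [hG1_def]
        exact (Summable.tsum_sub (SG₁ hy') (SG₁ hx)).symm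
      have e2 : p y - p x
          = ∑ i ∈ Finset.range N, ((i : ℝ) * a i * y ^ (i - 1) - (i : ℝ) * a i * x ^ (i - 1)) := by
        rw [hp_def, Finset.sum_sub_distrib]
      rw [e1, e2]
      refine Summable.sum_le_tsum _ (fun i _ => sub_nonneg.2 ?_) ((SG₁ hy').sub (SG₁ hx))
      exact mul_le_mul_of_nonneg_left (pow_le_pow_left₀ hx.1.le hxy.le _) (ha1nn i)
    have hG1y : 0 ≤ G₁ y := by
      rw [hG1_def]
      exact tsum_nonneg fun i => mul_nonneg (ha1nn i) (pow_nonneg hy'.1.le _)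
    have h2 : (G₁ y - G₁ x) * M x ≤ M₁ y - M₁ x := by
      rw [hK x hx, hK y hy']
      have hMxy : M x ≤ M y := hMmono x hx y hy' hxy.le
      nlinarith
    have h3 : M₁ y - M₁ x ≤ V * (y - x) := by
      have h := hLip x hx y hy'
      rw [Real.norm_eq_abs, Real.norm_eq_abs, abs_of_pos (sub_pos.2 hxy)] at h
      exact (le_abs_self _).trans h
    rw [div_le_div_iff₀ (sub_pos.2 hxy) hMx]
    have h4 : (p y - p x) * M x ≤ (G₁ y - G₁ x) * M x :=
      mul_le_mul_of_nonneg_right h1 hMx.le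
    linarith
  -- limit filter at 1 from the left
  have hlne : (nhdsWithin (1:ℝ) (Set.Ioo (0:ℝ) 1)).NeBot := by
    apply mem_closure_iff_nhdsWithin_neBot.mp
    rw [closure_Ioo (by norm_num : (0:ℝ) ≠ 1)]
    exact ⟨by norm_num, le_refl 1⟩
  have hMt : Filter.Tendsto M (nhdsWithin (1:ℝ) (Set.Ioo (0:ℝ) 1)) (nhds 1) := by
    have h := aux_tendsto_tsum_pow hμnn hμs (fun i => i)
    rw [hμ1] at h
    exact h
  -- partial sums are bounded by V
  have hbdd : ∀ N : ℕ, (∑ i ∈ Finset.range N, (i : ℝ) * ((i - 1 : ℕ) : ℝ) * a i) ≤ V := by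
    intro N
    have hq : Filter.Tendsto
        (fun x : ℝ => ∑ i ∈ Finset.range N, (i : ℝ) * ((i - 1 : ℕ) : ℝ) * a i * x ^ (i - 2))
        (nhdsWithin (1:ℝ) (Set.Ioo (0:ℝ) 1))
        (nhds (∑ i ∈ Finset.range N, (i : ℝ) * ((i - 1 : ℕ) : ℝ) * a i)) := by
      have hcont : Filter.Tendsto
          (fun x : ℝ => ∑ i ∈ Finset.range N, (i : ℝ) * ((i - 1 : ℕ) : ℝ) * a i * x ^ (i - 2))
          (nhds 1) (nhds (∑ i ∈ Finset.range N, (i : ℝ) * ((i - 1 : ℕ) : ℝ) * a i * (1:ℝ) ^ (i - 2))) :=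
        (continuous_finset_sum _ fun i _ => continuous_const.mul (continuous_pow (i - 2))).tendsto 1
      simp only [one_pow, mul_one] at hcont
      exact hcont.mono_left nhdsWithin_le_nhds
    have hVM : Filter.Tendsto (fun x : ℝ => V / M x)
        (nhdsWithin (1:ℝ) (Set.Ioo (0:ℝ) 1)) (nhds V) := by
      have h := Filter.Tendsto.div (tendsto_const_nhds (α := ℝ) (x := V)) hMt one_ne_zero
      rw [div_one] at h
      exact h
    refine le_of_tendsto_of_tendsto hq hVM ?_
    filter_upwards [self_mem_nhdsWithin] with x hx
    exact hstep N x hx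
  -- summability of the second factorial moment of a
  have ha2nn : ∀ i : ℕ, 0 ≤ (i : ℝ) * ((i - 1 : ℕ) : ℝ) * a i := fun i =>
    mul_nonneg (mul_nonneg (Nat.cast_nonneg i) (Nat.cast_nonneg _)) (ha i)
  have haS2' : Summable (fun i : ℕ => (i : ℝ) * ((i - 1 : ℕ) : ℝ) * a i) :=
    summable_of_sum_range_le ha2nn hbdd
  set S : ℝ := ∑' i : ℕ, (i : ℝ) * ((i - 1 : ℕ) : ℝ) * a i with hS_def
  have hSnn : 0 ≤ S := by rw [hS_def]; exact tsum_nonneg ha2nn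
  -- second derivative of G
  set G₂ : ℝ → ℝ := fun x => ∑' i : ℕ, (i : ℝ) * ((i - 1 : ℕ) : ℝ) * a i * x ^ (i - 2)
    with hG2_def
  have haS2 : Summable (fun i : ℕ => (i : ℝ) ^ 2 * a i) := by
    refine (haS2'.add haS1).congr fun i => ?_
    cases i with
    | zero => simp
    | succ n => push_cast [Nat.succ_sub_one]; ring
  have hDG1 : ∀ x ∈ Set.Ioo (-1:ℝ) 1, HasDerivAt G₁ (G₂ x) x := fun x hx =>
    aux_hasDerivAt_tsum_pow' ha haS2 hx
  -- second order identity
  have hK2 : ∀ x ∈ Set.Ioo (0:ℝ) 1, M₂ x = G₂ x * M x + G₁ x * M₁ x := by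
    intro x hx
    have hprod : HasDerivAt (fun y => G₁ y * M y) (G₂ x * M x + G₁ x * M₁ x) x :=
      (hDG1 x (hIoo hx)).mul (hDM x (hIoo hx))
    have heq : M₁ =ᶠ[nhds x] fun y => G₁ y * M y := by
      filter_upwards [Ioo_mem_nhds hx.1 hx.2] with y hy
      exact hK y hy
    exact (hDM1 x (hIoo hx)).unique (hprod.congr_of_eventuallyEq heq)
  -- limits of all the functions at 1 from the left
  have hM2t : Filter.Tendsto M₂ (nhdsWithin (1:ℝ) (Set.Ioo (0:ℝ) 1)) (nhds V) :=
    aux_tendsto_tsum_pow hμ2nn hμ2S (fun i => i - 2)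
  have hG2t : Filter.Tendsto G₂ (nhdsWithin (1:ℝ) (Set.Ioo (0:ℝ) 1)) (nhds S) :=
    aux_tendsto_tsum_pow ha2nn haS2' (fun i => i - 2)
  have hG1t : Filter.Tendsto G₁ (nhdsWithin (1:ℝ) (Set.Ioo (0:ℝ) 1)) (nhds 1) := by
    have h := aux_tendsto_tsum_pow ha1nn haS1 (fun i => i - 1)
    rwa [haC] at h
  have hM1t : Filter.Tendsto M₁ (nhdsWithin (1:ℝ) (Set.Ioo (0:ℝ) 1)) (nhds 1) := by
    have h := aux_tendsto_tsum_pow hμ1nn hμm (fun i => i - 1)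
    rwa [hμcrit] at h
  -- conclude V = S + 1
  have hVS : V = S + 1 := by
    have hR : Filter.Tendsto (fun x => G₂ x * M x + G₁ x * M₁ x)
        (nhdsWithin (1:ℝ) (Set.Ioo (0:ℝ) 1)) (nhds (S * 1 + 1 * 1)) :=
      (hG2t.mul hMt).add (hG1t.mul hM1t)
    have hL : Filter.Tendsto M₂ (nhdsWithin (1:ℝ) (Set.Ioo (0:ℝ) 1)) (nhds (S * 1 + 1 * 1)) := by
      refine hR.congr' ?_
      filter_upwards [self_mem_nhdsWithin] with x hx
      exact (hK2 x hx).symm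
    have := tendsto_nhds_unique hM2t hL
    linarith [this]
  -- final assembly
  have hSeq : (∑' i : ℕ, (i : ℝ) * ((i : ℝ) - 1) * w i * s ^ i) = S := by
    rw [hS_def]
    refine tsum_congr fun i => ?_
    simp only [ha_def]
    cases i with
    | zero => simp
    | succ n => push_cast [Nat.succ_sub_one]; ring
  have hSummGoal : Summable (fun i : ℕ => (i : ℝ) * ((i : ℝ) - 1) * w i * s ^ i) := by
    refine haS2'.congr fun i => ?_
    simp only [ha_def]
    cases i with
    | zero => simp
    | succ n => push_cast [Nat.succ_sub_one]; ring
  have hμ2eq : (∑' i : ℕ, (i : ℝ) ^ 2 * μ i) = V + 1 := by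
    have h1 : (∑' i : ℕ, (i : ℝ) ^ 2 * μ i)
        = ∑' i : ℕ, ((i : ℝ) * ((i - 1 : ℕ) : ℝ) * μ i + (i : ℝ) * μ i) := by
      refine tsum_congr fun i => ?_
      cases i with
      | zero => simp
      | succ n => push_cast [Nat.succ_sub_one]; ring
    rw [h1, Summable.tsum_add hμ2S hμm, hμcrit, hV_def]
  refine ⟨hSummGoal, ?_, ?_⟩
  · rw [hμ2eq, hSeq]; linarith
  · rw [hμ2eq]; linarith
end
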